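/- For any 𝒮-measurable real random variables β and S and any ℋ-measurable real random variable c (with all displayed expressions integrable), the expectation of the marginal estimating function is E[ e^{−Aβ} · (Y − e^{c + Aβ}) · J · (A − p̃) · S ] = E[ p̃·(1 − p̃) · S · ( e^{−β} · p⁻¹ · E[A·Π·Y | ℋ] − (1 − p)⁻¹ · E[(1−A)·Π·Y | ℋ] ) ], where Π := ∏_{j=1}^{Δ−1} (1 − A_j)/(1 − p_j) and J := (p̃/p)^{A} · ((1 − p̃)/(1 − p))^{1−A} · Π. In particular, the working-model term contributes nothing: E[ e^{c} · J · (A − p̃) · S ] = 0. -/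

import Mathlib

open MeasureTheory Real

variable {Ω : Type*}

/-- `Π := ∏_{j=1}^{Δ−1} (1 − A_j)/(1 − p_j)`, where `p_j := E[A_j | ℳ_j]`
(empty product `= 1` when `Δ = 1`). -/
noncomputable def PiProd {m0 : MeasurableSpace Ω} (μ : Measure Ω)
    (M : ℕ → MeasurableSpace Ω) (Δ : ℕ) (Aseq : ℕ → Ω → ℝ) : Ω → ℝ :=
  fun ω => ∏ j ∈ Finset.Icc 1 (Δ - 1), (1 - Aseq j ω) / (1 - (μ[Aseq j|M j]) ω)

/-- `J := (p̃/p)^A · ((1 − p̃)/(1 − p))^{1−A} · Π`, where `p := E[A | ℋ]`. -/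
noncomputable def Jweight {m0 : MeasurableSpace Ω} (μ : Measure Ω)
    (mH : MeasurableSpace Ω) (M : ℕ → MeasurableSpace Ω) (Δ : ℕ)
    (A : Ω → ℝ) (Aseq : ℕ → Ω → ℝ) (ptil : Ω → ℝ) : Ω → ℝ :=
  fun ω => (ptil ω / (μ[A|mH]) ω) ^ (A ω) *
    ((1 - ptil ω) / (1 - (μ[A|mH]) ω)) ^ (1 - A ω) * PiProd μ M Δ Aseq ω

section Aux

variable {α : Type*} {m m0 : MeasurableSpace α} {μ : MeasureTheory.Measure α}

open MeasureTheory

/-- helper: integrability of an a.e.-bounded measurable function on a finite measure space -/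
lemma integrable_of_bdd' [IsFiniteMeasure μ] {f : α → ℝ} {C : ℝ}
    (hmeas : AEStronglyMeasurable f μ) (hbd : ∀ᵐ ω ∂μ, |f ω| ≤ C) :
    Integrable f μ :=
  Integrable.mono' (integrable_const C) hmeas (by simpa [Real.norm_eq_abs] using hbd)

/-- helper: `E[1 - f | m] = 1 - E[f | m]` a.e. -/
lemma condexp_one_sub' [IsFiniteMeasure μ] (hm : m ≤ m0) {f : α → ℝ} (hf : Integrable f μ) :
    μ[(fun ω => 1 - f ω)|m] =ᵐ[μ] fun ω => 1 - (μ[f|m]) ω := by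
  have h0 : (fun ω => (1:ℝ) - f ω) = (fun _ => (1:ℝ)) - f := rfl
  rw [h0]
  filter_upwards [condExp_sub (integrable_const (1:ℝ)) hf (m := m)] with ω h1
  simp [h1, Pi.sub_apply, condExp_const hm (1:ℝ)]

/-- helper: `∫ g·X = ∫ g·E[X|m]` for `m`-measurable `g`. -/
lemma integral_mul_condexp' [IsFiniteMeasure μ] (hm : m ≤ m0) {g X : α → ℝ}
    (hg : StronglyMeasurable[m] g) (hgX : Integrable (fun ω => g ω * X ω) μ)
    (hX : Integrable X μ) :
    ∫ ω, g ω * X ω ∂μ = ∫ ω, g ω * (μ[X|m]) ω ∂μ := by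
  have h := condExp_mul_of_stronglyMeasurable_left hg (show Integrable (g * X) μ from hgX) hX
  calc ∫ ω, g ω * X ω ∂μ = ∫ ω, (μ[g * X|m]) ω ∂μ := (integral_condExp hm).symm
    _ = ∫ ω, g ω * (μ[X|m]) ω ∂μ := integral_congr_ae (h.mono fun ω hω => by
        simpa [Pi.mul_apply] using hω)

/-- helper: integrability of `g·E[X|m]`. -/
lemma integrable_mul_condexp' [IsFiniteMeasure μ] (hm : m ≤ m0) {g X : α → ℝ}
    (hg : StronglyMeasurable[m] g) (hgX : Integrable (fun ω => g ω * X ω) μ)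
    (hX : Integrable X μ) :
    Integrable (fun ω => g ω * (μ[X|m]) ω) μ := by
  have h := condExp_mul_of_stronglyMeasurable_left hg (show Integrable (g * X) μ from hgX) hX
  exact (integrable_condExp (f := g * X)).congr (h.mono fun ω hω => by
    simpa [Pi.mul_apply] using hω)

end Aux

/-- expected value of the marginal estimating function.
With nested sub-σ-algebras `𝒮 ⊆ ℋ ⊆ ℳ₁ ⊆ ⋯ ⊆ ℳ_{Δ−1} ⊆ ℱ` (convention `ℳ_Δ = ℱ`)
and `A, A_j, Y, p̃` as in the context, for any 𝒮-measurable `β`, `S` and ℋ-measurable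
`c` (all displayed expressions integrable),
`E[e^{−Aβ}·(Y − e^{c+Aβ})·J·(A − p̃)·S]
  = E[p̃(1 − p̃)·S·(e^{−β}·p⁻¹·E[AΠY | ℋ] − (1−p)⁻¹·E[(1−A)ΠY | ℋ])]`,
and in particular the working-model term contributes nothing:
`E[e^{c}·J·(A − p̃)·S] = 0`. -/
theorem marginal_estimating_function_expectation
    {m0 : MeasurableSpace Ω} (μ : Measure Ω) [IsProbabilityMeasure μ]
    (Δ : ℕ) (hΔ : 1 ≤ Δ)
    (mS mH : MeasurableSpace Ω) (M : ℕ → MeasurableSpace Ω)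
    (hSH : mS ≤ mH) (hHM : mH ≤ M 1)
    (hMmono : ∀ j k, 1 ≤ j → j ≤ k → k ≤ Δ → M j ≤ M k)
    (hMΔ : M Δ = m0)
    (A : Ω → ℝ) (hA : Measurable[M 1] A) (hA01 : ∀ ω, A ω = 0 ∨ A ω = 1)
    (hp : ∀ᵐ ω ∂μ, 0 < (μ[A|mH]) ω ∧ (μ[A|mH]) ω < 1)
    (Aseq : ℕ → Ω → ℝ)
    (hAseq : ∀ j ∈ Finset.Icc 1 (Δ - 1), Measurable[M (j + 1)] (Aseq j))
    (hAseq01 : ∀ j ∈ Finset.Icc 1 (Δ - 1), ∀ ω, Aseq j ω = 0 ∨ Aseq j ω = 1)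
    (δ : ℝ) (hδ : 0 < δ)
    (hpj : ∀ j ∈ Finset.Icc 1 (Δ - 1), ∀ᵐ ω ∂μ, (μ[Aseq j|M j]) ω ≤ 1 - δ)
    (Y : Ω → ℝ) (hY0 : ∀ ω, 0 ≤ Y ω) (hYbd : ∃ C, ∀ ω, Y ω ≤ C)
    (ptil : Ω → ℝ) (hptilmeas : StronglyMeasurable[mS] ptil)
    (hptil : ∀ᵐ ω ∂μ, 0 < ptil ω ∧ ptil ω < 1)
    (β : Ω → ℝ) (hβ : StronglyMeasurable[mS] β)
    (S : Ω → ℝ) (hS : StronglyMeasurable[mS] S)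
    (c : Ω → ℝ) (hc : StronglyMeasurable[mH] c)
    (hint1 : Integrable (fun ω => A ω * PiProd μ M Δ Aseq ω * Y ω) μ)
    (hint0 : Integrable (fun ω => (1 - A ω) * PiProd μ M Δ Aseq ω * Y ω) μ)
    (hintMain : Integrable (fun ω => exp (-(A ω * β ω)) *
      (Y ω - exp (c ω + A ω * β ω)) * Jweight μ mH M Δ A Aseq ptil ω *
      (A ω - ptil ω) * S ω) μ)
    (hintRHS : Integrable (fun ω => ptil ω * (1 - ptil ω) * S ω *
      (exp (-(β ω)) * ((μ[A|mH]) ω)⁻¹ *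
          (μ[(fun ω'' => A ω'' * PiProd μ M Δ Aseq ω'' * Y ω'')|mH]) ω -
        (1 - (μ[A|mH]) ω)⁻¹ *
          (μ[(fun ω'' => (1 - A ω'') * PiProd μ M Δ Aseq ω'' * Y ω'')|mH]) ω)) μ)
    (hintWork : Integrable (fun ω => exp (c ω) * Jweight μ mH M Δ A Aseq ptil ω *
      (A ω - ptil ω) * S ω) μ) :
    (∫ ω, exp (-(A ω * β ω)) * (Y ω - exp (c ω + A ω * β ω)) *
        Jweight μ mH M Δ A Aseq ptil ω * (A ω - ptil ω) * S ω ∂μ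
      = ∫ ω, ptil ω * (1 - ptil ω) * S ω *
          (exp (-(β ω)) * ((μ[A|mH]) ω)⁻¹ *
              (μ[(fun ω'' => A ω'' * PiProd μ M Δ Aseq ω'' * Y ω'')|mH]) ω -
            (1 - (μ[A|mH]) ω)⁻¹ *
              (μ[(fun ω'' => (1 - A ω'') * PiProd μ M Δ Aseq ω'' * Y ω'')|mH]) ω) ∂μ) ∧
    (∫ ω, exp (c ω) * Jweight μ mH M Δ A Aseq ptil ω * (A ω - ptil ω) * S ω ∂μ = 0) := by
  classical
  -- σ-algebra facts
  have hMle : ∀ j, 1 ≤ j → j ≤ Δ → M j ≤ m0 := by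
    intro j h1 h2
    have := hMmono j Δ h1 h2 le_rfl
    rwa [hMΔ] at this
  have hM1 : M 1 ≤ m0 := hMle 1 le_rfl hΔ
  have hmH : mH ≤ m0 := hHM.trans hM1
  have hA0 : Measurable[m0] A := hA.mono hM1 le_rfl
  have hA_bd : ∀ ω, |A ω| ≤ 1 := fun ω => by rcases hA01 ω with h | h <;> simp [h]
  have h1A_bd : ∀ ω, |1 - A ω| ≤ 1 := fun ω => by rcases hA01 ω with h | h <;> simp [h]
  set P : Ω → ℝ := PiProd μ M Δ Aseq with hP
  set F : ℕ → Ω → ℝ := fun j ω => (1 - Aseq j ω) / (1 - (μ[Aseq j|M j]) ω) with hF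
  have hPF : P = fun ω => ∏ j ∈ Finset.Icc 1 (Δ - 1), F j ω := rfl
  -- a.e. facts about the factors
  have hpj' : ∀ᵐ ω ∂μ, ∀ j ∈ Finset.Icc 1 (Δ - 1), (μ[Aseq j|M j]) ω ≤ 1 - δ :=
    (Filter.eventually_all_finset _).2 hpj
  set D : ℝ := max 1 δ⁻¹ with hD
  have hD1 : (1:ℝ) ≤ D := le_max_left _ _
  set C : ℝ := D ^ (Δ - 1) with hC
  have hfac : ∀ᵐ ω ∂μ, ∀ j ∈ Finset.Icc 1 (Δ - 1), 0 ≤ F j ω ∧ F j ω ≤ D := by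
    filter_upwards [hpj'] with ω hω j hj
    have hden : δ ≤ 1 - (μ[Aseq j|M j]) ω := by have := hω j hj; linarith
    have hnum : 0 ≤ 1 - Aseq j ω ∧ 1 - Aseq j ω ≤ 1 := by
      rcases hAseq01 j hj ω with h | h <;> simp [h]
    constructor
    · exact div_nonneg hnum.1 (le_trans hδ.le hden)
    · refine le_trans ?_ (le_max_right 1 δ⁻¹)
      rw [← one_div δ]
      exact div_le_div₀ zero_le_one hnum.2 hδ hden
  have hprod_bd : ∀ᵐ ω ∂μ, ∀ k, k ≤ Δ - 1 →
      0 ≤ ∏ j ∈ Finset.Icc 1 k, F j ω ∧ (∏ j ∈ Finset.Icc 1 k, F j ω) ≤ C := by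
    filter_upwards [hfac] with ω hω k hk
    have hsub : Finset.Icc 1 k ⊆ Finset.Icc 1 (Δ - 1) := Finset.Icc_subset_Icc_right hk
    refine ⟨Finset.prod_nonneg fun j hj => (hω j (hsub hj)).1, ?_⟩
    calc (∏ j ∈ Finset.Icc 1 k, F j ω) ≤ ∏ j ∈ Finset.Icc 1 k, D :=
          Finset.prod_le_prod (fun j hj => (hω j (hsub hj)).1)
            (fun j hj => (hω j (hsub hj)).2)
      _ = D ^ k := by simp [Finset.prod_const, Nat.card_Icc]
      _ ≤ C := pow_le_pow_right₀ hD1 hk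
  -- measurability of partial products
  have hF_meas : ∀ j ∈ Finset.Icc 1 (Δ - 1), Measurable[m0] (F j) := by
    intro j hj
    obtain ⟨hj1, hj2⟩ := Finset.mem_Icc.mp hj
    have h1 : Measurable[m0] (Aseq j) :=
      (hAseq j hj).mono (hMle (j + 1) (by omega) (by omega)) le_rfl
    have h2 : Measurable[m0] (μ[Aseq j|M j]) :=
      stronglyMeasurable_condExp.measurable.mono (hMle j hj1 (by omega)) le_rfl
    exact (measurable_const.sub h1).div (measurable_const.sub h2)
  have hprod_meas : ∀ k, k ≤ Δ - 1 → Measurable[m0] (fun ω => ∏ j ∈ Finset.Icc 1 k, F j ω) := by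
    intro k hk
    exact Finset.measurable_prod _ fun j hj =>
      hF_meas j (Finset.Icc_subset_Icc_right hk hj)
  have hprod_int : ∀ k, k ≤ Δ - 1 → Integrable (fun ω => ∏ j ∈ Finset.Icc 1 k, F j ω) μ := by
    intro k hk
    refine integrable_of_bdd' (C := C) (hprod_meas k hk).aestronglyMeasurable ?_
    filter_upwards [hprod_bd] with ω hω
    rw [abs_of_nonneg (hω k hk).1]
    exact (hω k hk).2
  have hprod_smM : ∀ k, k ≤ Δ - 1 →
      StronglyMeasurable[M (k + 1)] (fun ω => ∏ j ∈ Finset.Icc 1 k, F j ω) := by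
    intro k hk
    have hk1 : k + 1 ≤ Δ := by omega
    refine Measurable.stronglyMeasurable ?_
    refine Finset.measurable_prod _ fun j hj => ?_
    obtain ⟨hj1, hj2⟩ := Finset.mem_Icc.mp hj
    have hjΔ : j ∈ Finset.Icc 1 (Δ - 1) := Finset.mem_Icc.mpr ⟨hj1, by omega⟩
    have h1 : Measurable[M (k + 1)] (Aseq j) :=
      (hAseq j hjΔ).mono (hMmono (j + 1) (k + 1) (by omega) (by omega) hk1) le_rfl
    have h2 : Measurable[M (k + 1)] (μ[Aseq j|M j]) :=
      stronglyMeasurable_condExp.measurable.mono (hMmono j (k + 1) hj1 (by omega) hk1) le_rfl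
    exact (measurable_const.sub h1).div (measurable_const.sub h2)
  have hAj_int : ∀ j ∈ Finset.Icc 1 (Δ - 1), Integrable (Aseq j) μ := by
    intro j hj
    obtain ⟨hj1, hj2⟩ := Finset.mem_Icc.mp hj
    refine integrable_of_bdd' (C := 1)
      (((hAseq j hj).mono (hMle (j + 1) (by omega) (by omega)) le_rfl).aestronglyMeasurable) ?_
    filter_upwards with ω
    rcases hAseq01 j hj ω with h | h <;> simp [h]
  -- key towering lemma : E[Π_k | M 1] = 1
  have key : ∀ k, k ≤ Δ - 1 →
      μ[(fun ω => ∏ j ∈ Finset.Icc 1 k, F j ω)|M 1] =ᵐ[μ] fun _ => (1:ℝ) := by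
    intro k
    induction k with
    | zero =>
      intro _
      have h0 : (fun ω => ∏ j ∈ Finset.Icc 1 0, F j ω) = fun _ => (1:ℝ) := by
        funext ω; simp
      rw [h0, condExp_const hM1 (1:ℝ)]
    | succ n ih =>
      intro hk
      have hn : n ≤ Δ - 1 := by omega
      have hmem : n + 1 ∈ Finset.Icc 1 (Δ - 1) := Finset.mem_Icc.mpr ⟨by omega, hk⟩
      have hMn1 : M (n + 1) ≤ m0 := hMle (n + 1) (by omega) (by omega)
      have hM1n : M 1 ≤ M (n + 1) := hMmono 1 (n + 1) le_rfl (by omega) (by omega)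
      set G : Ω → ℝ := fun ω =>
        (∏ j ∈ Finset.Icc 1 n, F j ω) * (1 - (μ[Aseq (n + 1)|M (n + 1)]) ω)⁻¹ with hG
      have hG_sm : StronglyMeasurable[M (n + 1)] G := by
        rw [hG]
        exact ((hprod_smM n hn).measurable.mul
          (measurable_const.sub stronglyMeasurable_condExp.measurable).inv).stronglyMeasurable
      have hre : (fun ω => ∏ j ∈ Finset.Icc 1 (n + 1), F j ω)
          = fun ω => G ω * (1 - Aseq (n + 1) ω) := by
        funext ω
        rw [Finset.prod_Icc_succ_top (by omega)]
        simp only [hG, hF, div_eq_mul_inv]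
        ring
      have h1A_int : Integrable (fun ω => 1 - Aseq (n + 1) ω) μ :=
        (integrable_const (1:ℝ)).sub (hAj_int (n + 1) hmem)
      have hGA_int : Integrable (fun ω => G ω * (1 - Aseq (n + 1) ω)) μ := by
        rw [← hre]
        exact hprod_int (n + 1) hk
      have hcondA : μ[(fun ω => 1 - Aseq (n + 1) ω)|M (n + 1)]
          =ᵐ[μ] fun ω => 1 - (μ[Aseq (n + 1)|M (n + 1)]) ω :=
        condexp_one_sub' hMn1 (hAj_int (n + 1) hmem)
      have step1 : μ[(fun ω => ∏ j ∈ Finset.Icc 1 (n + 1), F j ω)|M (n + 1)]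
          =ᵐ[μ] fun ω => ∏ j ∈ Finset.Icc 1 n, F j ω := by
        rw [hre]
        have hpull : μ[(fun ω => G ω * (1 - Aseq (n + 1) ω))|M (n + 1)]
            =ᵐ[μ] G * μ[(fun ω => 1 - Aseq (n + 1) ω)|M (n + 1)] :=
          condExp_mul_of_stronglyMeasurable_left hG_sm
            (show Integrable (G * fun ω => 1 - Aseq (n + 1) ω) μ from hGA_int) h1A_int
        refine hpull.trans ?_
        filter_upwards [hcondA, hpj (n + 1) hmem] with ω h1 h2
        have hne : 1 - (μ[Aseq (n + 1)|M (n + 1)]) ω ≠ 0 := by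
          intro hcon; rw [sub_eq_zero] at hcon; rw [← hcon] at h2; linarith
        rw [Pi.mul_apply, h1]
        simp only [hG]
        rw [mul_assoc, inv_mul_cancel₀ hne, mul_one]
      calc μ[(fun ω => ∏ j ∈ Finset.Icc 1 (n + 1), F j ω)|M 1]
          =ᵐ[μ] μ[μ[(fun ω => ∏ j ∈ Finset.Icc 1 (n + 1), F j ω)|M (n + 1)]|M 1] :=
            (condExp_condExp_of_le hM1n hMn1).symm
        _ =ᵐ[μ] μ[(fun ω => ∏ j ∈ Finset.Icc 1 n, F j ω)|M 1] := condExp_congr_ae step1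
        _ =ᵐ[μ] fun _ => (1:ℝ) := ih hn
  have hPi_cond : μ[P|M 1] =ᵐ[μ] fun _ => (1:ℝ) := by
    rw [hPF]
    exact key (Δ - 1) le_rfl
  have hP_meas : Measurable[m0] P := by rw [hPF]; exact hprod_meas (Δ - 1) le_rfl
  have hP_int : Integrable P μ := by rw [hPF]; exact hprod_int (Δ - 1) le_rfl
  -- integrabilities with A
  have hAP_int : Integrable (fun ω => A ω * P ω) μ :=
    hP_int.bdd_mul hA0.aestronglyMeasurable
      (c := 1) (Filter.Eventually.of_forall fun ω => by simpa [Real.norm_eq_abs] using hA_bd ω)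
  have h1AP_int : Integrable (fun ω => (1 - A ω) * P ω) μ :=
    hP_int.bdd_mul (measurable_const.sub hA0).aestronglyMeasurable
      (c := 1) (Filter.Eventually.of_forall fun ω => by simpa [Real.norm_eq_abs] using h1A_bd ω)
  have hA_int : Integrable A μ := integrable_of_bdd' (C := 1) hA0.aestronglyMeasurable
      (Filter.Eventually.of_forall hA_bd)
  -- conditional expectations of A·Π and (1−A)·Π
  have hAPi_M1 : μ[(fun ω => A ω * P ω)|M 1] =ᵐ[μ] A := by
    have hpull : μ[(fun ω => A ω * P ω)|M 1] =ᵐ[μ] A * μ[P|M 1] :=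
      condExp_mul_of_stronglyMeasurable_left hA.stronglyMeasurable
        (show Integrable (A * P) μ from hAP_int) hP_int
    refine hpull.trans ?_
    filter_upwards [hPi_cond] with ω hω
    rw [Pi.mul_apply, hω, mul_one]
  have hAPi_cond : μ[(fun ω => A ω * P ω)|mH] =ᵐ[μ] μ[A|mH] :=
    (condExp_condExp_of_le hHM hM1).symm.trans (condExp_congr_ae hAPi_M1)
  have h1APi_M1 : μ[(fun ω => (1 - A ω) * P ω)|M 1] =ᵐ[μ] fun ω => 1 - A ω := by
    have hpull : μ[(fun ω => (1 - A ω) * P ω)|M 1]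
        =ᵐ[μ] (fun ω => 1 - A ω) * μ[P|M 1] :=
      condExp_mul_of_stronglyMeasurable_left (measurable_const.sub hA).stronglyMeasurable
        (show Integrable ((fun ω => 1 - A ω) * P) μ from h1AP_int) hP_int
    refine hpull.trans ?_
    filter_upwards [hPi_cond] with ω hω
    rw [Pi.mul_apply, hω, mul_one]
  have h1APi_cond : μ[(fun ω => (1 - A ω) * P ω)|mH]
      =ᵐ[μ] fun ω => 1 - (μ[A|mH]) ω :=
    (((condExp_condExp_of_le hHM hM1).symm.trans (condExp_congr_ae h1APi_M1)).trans
      (condexp_one_sub' hmH hA_int))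
  -- mH-measurable weight functions
  have hptilH : Measurable[mH] ptil := (hptilmeas.mono hSH).measurable
  have hβH : Measurable[mH] β := (hβ.mono hSH).measurable
  have hSmH : Measurable[mH] S := (hS.mono hSH).measurable
  have hcH : Measurable[mH] c := hc.measurable
  have hpH : Measurable[mH] (μ[A|mH]) := stronglyMeasurable_condExp.measurable
  set g : Ω → ℝ := fun ω =>
    ptil ω * (1 - ptil ω) * S ω * (exp (-(β ω)) * ((μ[A|mH]) ω)⁻¹) with hgdef
  set h : Ω → ℝ := fun ω =>
    ptil ω * (1 - ptil ω) * S ω * (1 - (μ[A|mH]) ω)⁻¹ with hhdef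
  set u : Ω → ℝ := fun ω =>
    exp (c ω) * (ptil ω * (1 - ptil ω) * S ω) * ((μ[A|mH]) ω)⁻¹ with hudef
  set v : Ω → ℝ := fun ω =>
    exp (c ω) * (ptil ω * (1 - ptil ω) * S ω) * (1 - (μ[A|mH]) ω)⁻¹ with hvdef
  have hg_sm : StronglyMeasurable[mH] g := by
    rw [hgdef]
    exact (((hptilH.mul (measurable_const.sub hptilH)).mul hSmH).mul
      ((Real.measurable_exp.comp hβH.neg).mul hpH.inv)).stronglyMeasurable
  have hh_sm : StronglyMeasurable[mH] h := by
    rw [hhdef]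
    exact (((hptilH.mul (measurable_const.sub hptilH)).mul hSmH).mul
      (measurable_const.sub hpH).inv).stronglyMeasurable
  have hu_sm : StronglyMeasurable[mH] u := by
    rw [hudef]
    exact (((Real.measurable_exp.comp hcH).mul
      ((hptilH.mul (measurable_const.sub hptilH)).mul hSmH)).mul hpH.inv).stronglyMeasurable
  have hv_sm : StronglyMeasurable[mH] v := by
    rw [hvdef]
    exact (((Real.measurable_exp.comp hcH).mul
      ((hptilH.mul (measurable_const.sub hptilH)).mul hSmH)).mul
      (measurable_const.sub hpH).inv).stronglyMeasurable
  -- pointwise identities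
  have hP2 : ∀ ω, exp (c ω) * Jweight μ mH M Δ A Aseq ptil ω * (A ω - ptil ω) * S ω
      = u ω * (A ω * P ω) - v ω * ((1 - A ω) * P ω) := by
    intro ω
    rcases hA01 ω with h0 | h0
    · simp only [Jweight, ← hP, hudef, hvdef, h0, Real.rpow_zero, Real.rpow_one, sub_zero,
        div_eq_mul_inv]
      ring
    · simp only [Jweight, ← hP, hudef, hvdef, h0, Real.rpow_zero, Real.rpow_one, sub_self,
        div_eq_mul_inv]
      ring
  have hsplit : ∀ ω, exp (-(A ω * β ω)) * (Y ω - exp (c ω + A ω * β ω)) *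
        Jweight μ mH M Δ A Aseq ptil ω * (A ω - ptil ω) * S ω
      = exp (-(A ω * β ω)) * Y ω * Jweight μ mH M Δ A Aseq ptil ω * (A ω - ptil ω) * S ω
        - exp (c ω) * Jweight μ mH M Δ A Aseq ptil ω * (A ω - ptil ω) * S ω := by
    intro ω
    have he : exp (-(A ω * β ω)) * exp (c ω + A ω * β ω) = exp (c ω) := by
      rw [← Real.exp_add]; congr 1; ring
    linear_combination (-(Jweight μ mH M Δ A Aseq ptil ω * (A ω - ptil ω) * S ω)) * he
  have hP1 : ∀ ω, exp (-(A ω * β ω)) * Y ω * Jweight μ mH M Δ A Aseq ptil ω *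
        (A ω - ptil ω) * S ω
      = g ω * (A ω * P ω * Y ω) - h ω * ((1 - A ω) * P ω * Y ω) := by
    intro ω
    rcases hA01 ω with h0 | h0
    · simp only [Jweight, ← hP, hgdef, hhdef, h0, Real.rpow_zero, Real.rpow_one, sub_zero,
        zero_mul, neg_zero, Real.exp_zero, div_eq_mul_inv]
      ring
    · simp only [Jweight, ← hP, hgdef, hhdef, h0, Real.rpow_zero, Real.rpow_one, sub_self,
        one_mul, div_eq_mul_inv]
      ring
  have hP1' : ∀ ω, exp (-(A ω * β ω)) * (Y ω - exp (c ω + A ω * β ω)) *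
        Jweight μ mH M Δ A Aseq ptil ω * (A ω - ptil ω) * S ω
        + exp (c ω) * Jweight μ mH M Δ A Aseq ptil ω * (A ω - ptil ω) * S ω
      = g ω * (A ω * P ω * Y ω) - h ω * ((1 - A ω) * P ω * Y ω) := by
    intro ω
    rw [hsplit ω, hP1 ω]
    ring
  -- transfer identities for integrability
  have e_gX1 : ∀ ω, A ω * (exp (-(A ω * β ω)) * (Y ω - exp (c ω + A ω * β ω)) *
        Jweight μ mH M Δ A Aseq ptil ω * (A ω - ptil ω) * S ω
        + exp (c ω) * Jweight μ mH M Δ A Aseq ptil ω * (A ω - ptil ω) * S ω)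
      = g ω * (A ω * P ω * Y ω) := by
    intro ω
    rw [hP1' ω]
    rcases hA01 ω with h0 | h0 <;> rw [h0] <;> ring
  have e_hX0 : ∀ ω, -((1 - A ω) * (exp (-(A ω * β ω)) * (Y ω - exp (c ω + A ω * β ω)) *
        Jweight μ mH M Δ A Aseq ptil ω * (A ω - ptil ω) * S ω
        + exp (c ω) * Jweight μ mH M Δ A Aseq ptil ω * (A ω - ptil ω) * S ω))
      = h ω * ((1 - A ω) * P ω * Y ω) := by
    intro ω
    rw [hP1' ω]
    rcases hA01 ω with h0 | h0 <;> rw [h0] <;> ring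
  have e_uAP : ∀ ω, A ω * (exp (c ω) * Jweight μ mH M Δ A Aseq ptil ω *
        (A ω - ptil ω) * S ω)
      = u ω * (A ω * P ω) := by
    intro ω
    rw [hP2 ω]
    rcases hA01 ω with h0 | h0 <;> rw [h0] <;> ring
  have e_v1AP : ∀ ω, -((1 - A ω) * (exp (c ω) * Jweight μ mH M Δ A Aseq ptil ω *
        (A ω - ptil ω) * S ω))
      = v ω * ((1 - A ω) * P ω) := by
    intro ω
    rw [hP2 ω]
    rcases hA01 ω with h0 | h0 <;> rw [h0] <;> ring
  -- integrability of the pieces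
  have hgX1_int : Integrable (fun ω => g ω * (A ω * P ω * Y ω)) μ := by
    have h1 := (hintMain.add hintWork).bdd_mul hA0.aestronglyMeasurable
      (c := 1) (Filter.Eventually.of_forall fun ω => by simpa [Real.norm_eq_abs] using hA_bd ω)
    exact h1.congr (Filter.Eventually.of_forall fun ω => e_gX1 ω)
  have hhX0_int : Integrable (fun ω => h ω * ((1 - A ω) * P ω * Y ω)) μ := by
    have h1 := ((hintMain.add hintWork).bdd_mul
      (measurable_const.sub hA0).aestronglyMeasurable
      (c := 1) (Filter.Eventually.of_forall fun ω => by simpa [Real.norm_eq_abs] using h1A_bd ω)).neg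
    exact h1.congr (Filter.Eventually.of_forall fun ω => e_hX0 ω)
  have huAP_int : Integrable (fun ω => u ω * (A ω * P ω)) μ := by
    have h1 := hintWork.bdd_mul hA0.aestronglyMeasurable
      (c := 1) (Filter.Eventually.of_forall fun ω => by simpa [Real.norm_eq_abs] using hA_bd ω)
    exact h1.congr (Filter.Eventually.of_forall fun ω => e_uAP ω)
  have hv1AP_int : Integrable (fun ω => v ω * ((1 - A ω) * P ω)) μ := by
    have h1 := (hintWork.bdd_mul (measurable_const.sub hA0).aestronglyMeasurable
      (c := 1) (Filter.Eventually.of_forall fun ω => by simpa [Real.norm_eq_abs] using h1A_bd ω)).neg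
    exact h1.congr (Filter.Eventually.of_forall fun ω => e_v1AP ω)
  -- the working-model term vanishes
  have hwork : ∫ ω, exp (c ω) * Jweight μ mH M Δ A Aseq ptil ω * (A ω - ptil ω) * S ω ∂μ
      = 0 := by
    have h1 : ∫ ω, exp (c ω) * Jweight μ mH M Δ A Aseq ptil ω * (A ω - ptil ω) * S ω ∂μ
        = ∫ ω, (u ω * (A ω * P ω) - v ω * ((1 - A ω) * P ω)) ∂μ :=
      integral_congr_ae (Filter.Eventually.of_forall hP2)
    rw [h1, integral_sub huAP_int hv1AP_int,
      integral_mul_condexp' hmH hu_sm huAP_int hAP_int,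
      integral_mul_condexp' hmH hv_sm hv1AP_int h1AP_int]
    have h2 : ∫ ω, u ω * (μ[(fun ω => A ω * P ω)|mH]) ω ∂μ
        = ∫ ω, v ω * (μ[(fun ω => (1 - A ω) * P ω)|mH]) ω ∂μ := by
      refine integral_congr_ae ?_
      filter_upwards [hAPi_cond, h1APi_cond, hp] with ω h3 h4 h5
      have hpne : (μ[A|mH]) ω ≠ 0 := ne_of_gt h5.1
      have hpne1 : 1 - (μ[A|mH]) ω ≠ 0 := by
        have := h5.2; intro hcon; rw [sub_eq_zero] at hcon; rw [← hcon] at this; linarith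
      rw [h3, h4]
      simp only [hudef, hvdef]
      have e1 : rexp (c ω) * (ptil ω * (1 - ptil ω) * S ω) * ((μ[A|mH]) ω)⁻¹ *
          (μ[A|mH]) ω = rexp (c ω) * (ptil ω * (1 - ptil ω) * S ω) := by
        rw [mul_assoc _ _ ((μ[A|mH]) ω), inv_mul_cancel₀ hpne, mul_one]
      have e2 : rexp (c ω) * (ptil ω * (1 - ptil ω) * S ω) * (1 - (μ[A|mH]) ω)⁻¹ *
          (1 - (μ[A|mH]) ω) = rexp (c ω) * (ptil ω * (1 - ptil ω) * S ω) := by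
        rw [mul_assoc _ _ (1 - (μ[A|mH]) ω), inv_mul_cancel₀ hpne1, mul_one]
      rw [e1, e2]
    rw [h2, sub_self]
  refine ⟨?_, hwork⟩
  -- integrability of g·E1 and h·E0
  have hgE1_int : Integrable (fun ω =>
      g ω * (μ[(fun ω => A ω * P ω * Y ω)|mH]) ω) μ :=
    integrable_mul_condexp' hmH hg_sm hgX1_int hint1
  have hhE0_int : Integrable (fun ω =>
      h ω * (μ[(fun ω => (1 - A ω) * P ω * Y ω)|mH]) ω) μ :=
    integrable_mul_condexp' hmH hh_sm hhX0_int hint0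
  have hstep : ∫ ω, exp (-(A ω * β ω)) * (Y ω - exp (c ω + A ω * β ω)) *
        Jweight μ mH M Δ A Aseq ptil ω * (A ω - ptil ω) * S ω ∂μ
      = ∫ ω, (g ω * (A ω * P ω * Y ω) - h ω * ((1 - A ω) * P ω * Y ω)
          - exp (c ω) * Jweight μ mH M Δ A Aseq ptil ω * (A ω - ptil ω) * S ω) ∂μ := by
    refine integral_congr_ae (Filter.Eventually.of_forall fun ω => ?_)
    linear_combination hP1' ω
  have i1 : ∫ ω, (g ω * (A ω * P ω * Y ω) - h ω * ((1 - A ω) * P ω * Y ω)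
        - exp (c ω) * Jweight μ mH M Δ A Aseq ptil ω * (A ω - ptil ω) * S ω) ∂μ
      = (∫ ω, (g ω * (A ω * P ω * Y ω) - h ω * ((1 - A ω) * P ω * Y ω)) ∂μ)
        - ∫ ω, exp (c ω) * Jweight μ mH M Δ A Aseq ptil ω * (A ω - ptil ω) * S ω ∂μ :=
    integral_sub (hgX1_int.sub hhX0_int) hintWork
  have i2 : ∫ ω, (g ω * (A ω * P ω * Y ω) - h ω * ((1 - A ω) * P ω * Y ω)) ∂μ
      = (∫ ω, g ω * (A ω * P ω * Y ω) ∂μ) - ∫ ω, h ω * ((1 - A ω) * P ω * Y ω) ∂μ :=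
    integral_sub hgX1_int hhX0_int
  have i3 : ∫ ω, (g ω * (μ[(fun ω => A ω * P ω * Y ω)|mH]) ω
        - h ω * (μ[(fun ω => (1 - A ω) * P ω * Y ω)|mH]) ω) ∂μ
      = (∫ ω, g ω * (μ[(fun ω => A ω * P ω * Y ω)|mH]) ω ∂μ)
        - ∫ ω, h ω * (μ[(fun ω => (1 - A ω) * P ω * Y ω)|mH]) ω ∂μ :=
    integral_sub hgE1_int hhE0_int
  rw [hstep, i1, i2, hwork, sub_zero,
    integral_mul_condexp' hmH hg_sm hgX1_int hint1,
    integral_mul_condexp' hmH hh_sm hhX0_int hint0, ← i3]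
  refine integral_congr_ae (Filter.Eventually.of_forall fun ω => ?_)
  simp only [hgdef, hhdef]
  ring
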